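/- Let $D$ be a balanced bipartite digraph on $2a$ vertices with partite sets $V_1, V_2$ of size $a$. If $D$ contains a cycle factor $C_1, \ldots, C_s$ with $s \ge 2$ such that no two of the cycles can be merged into a single cycle on the union of their vertex sets, then for the shortest cycle $C_1$, the total number of arcs between $V(C_1)$ and $V(D) \setminus V(C_1)$ is at most $\frac{|V(C_1)| \cdot (2a - |V(C_1)|)}{2}$. -/

import Mathlib

open Finset

variable {V : Type*}

/-- Cyclic successor of `x` on the cycle represented by list `c`. -/
def cycNext [DecidableEq V] (c : List V) (x : V) : V :=
  c.getD ((c.idxOf x + 1) % c.length) x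

/-- `c` is a directed cycle of the digraph with arc relation `A`. -/
def IsDicycle [DecidableEq V] (A : V → V → Prop) (c : List V) : Prop :=
  2 ≤ c.length ∧ c.Nodup ∧ ∀ x ∈ c, A x (cycNext c x)

/-- The digraph has a hamiltonian (directed) cycle. -/
def IsHamiltonian [DecidableEq V] (A : V → V → Prop) : Prop :=
  ∃ c : List V, IsDicycle A c ∧ ∀ v, v ∈ c

/-- `p` is a hamiltonian directed path. -/
def IsHamDipath (A : V → V → Prop) (p : List V) : Prop :=
  p.Nodup ∧ p.Chain' A ∧ ∀ v, v ∈ p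

/-- The digraph has a hamiltonian directed path. -/
def IsTraceable (A : V → V → Prop) : Prop := ∃ p, IsHamDipath A p

/-- The digraph has a cycle factor: vertex-disjoint dicycles covering all vertices. -/
def HasCycleFactor [DecidableEq V] (A : V → V → Prop) : Prop :=
  ∃ L : List (List V), (∀ c ∈ L, IsDicycle A c) ∧
    L.Pairwise (fun c d => ∀ x ∈ c, x ∉ d) ∧ ∀ v, ∃ c ∈ L, v ∈ c

/-- `V₁, V₂` form a bipartition of the digraph into independent sets. -/
def IsBipartition [DecidableEq V] [Fintype V] (A : V → V → Prop) (V₁ V₂ : Finset V) : Prop :=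
  Disjoint V₁ V₂ ∧ V₁ ∪ V₂ = Finset.univ ∧
    (∀ x ∈ V₁, ∀ y ∈ V₁, ¬ A x y) ∧ (∀ x ∈ V₂, ∀ y ∈ V₂, ¬ A x y)

/-- total degree (out-degree plus in-degree) of `v`. -/
def deg [Fintype V] (A : V → V → Prop) [DecidableRel A] (v : V) : ℕ :=
  (Finset.univ.filter (fun y => A v y)).card + (Finset.univ.filter (fun y => A y v)).card

/-- number of arcs (in both directions) between `v` and the set `X`. -/
def degIn (A : V → V → Prop) [DecidableRel A] (X : Finset V) (v : V) : ℕ :=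
  (X.filter (fun y => A v y)).card + (X.filter (fun y => A y v)).card

/-- total number of arcs between `X` and `Y`, in both directions. -/
def arcsBetween (A : V → V → Prop) [DecidableRel A] (X Y : Finset V) : ℕ :=
  ((X ×ˢ Y).filter (fun p => A p.1 p.2)).card + ((Y ×ˢ X).filter (fun p => A p.1 p.2)).card

/-- strong connectivity. -/
def IsStrong (A : V → V → Prop) : Prop := ∀ u v, Relation.ReflTransGen A u v

/-- `N⁺(S)`: out-neighbourhood of a set. -/
def outNbrs [Fintype V] [DecidableEq V] (A : V → V → Prop) [DecidableRel A]
    (S : Finset V) : Finset V :=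
  Finset.univ.filter (fun y => ∃ v ∈ S, A v y)

/-- a perfect matching from `X` to `Y` using arcs of the digraph. -/
def HasPerfectMatching (A : V → V → Prop) (X Y : Finset V) : Prop :=
  ∃ f : V → V, Set.InjOn f X ∧ ∀ x ∈ X, f x ∈ Y ∧ A x (f x)

/-- a matching from `V₁` to `V₂`: a set of pairwise independent arcs. -/
def IsMatching (A : V → V → Prop) (V₁ V₂ : Finset V) (M : Finset (V × V)) : Prop :=
  (∀ p ∈ M, p.1 ∈ V₁ ∧ p.2 ∈ V₂ ∧ A p.1 p.2) ∧
  (∀ p ∈ M, ∀ q ∈ M, p ≠ q → p.1 ≠ q.1 ∧ p.2 ≠ q.2)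

/-- the digraph (with arc relation `A`) is a member of the family `𝓗₁`,
with partite sets `S ∪ R` and `U ∪ W`. -/
def IsH1 [DecidableEq V] [Fintype V] (A : V → V → Prop) [DecidableRel A] (a : ℕ)
    (S R U W : Finset V) : Prop :=
  Odd a ∧ 3 ≤ a ∧
  Disjoint S R ∧ Disjoint U W ∧ Disjoint (S ∪ R) (U ∪ W) ∧
  S ∪ R ∪ U ∪ W = Finset.univ ∧
  S.card = (a + 1) / 2 ∧ W.card = (a + 1) / 2 ∧
  U.card = (a - 1) / 2 ∧ R.card = (a - 1) / 2 ∧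
  (∀ x ∈ S ∪ R, ∀ y ∈ S ∪ R, ¬ A x y) ∧
  (∀ x ∈ U ∪ W, ∀ y ∈ U ∪ W, ¬ A x y) ∧
  (∀ r ∈ R, ∀ w ∈ W, A r w ∧ A w r) ∧
  (∀ u ∈ U, ∀ s ∈ S, A u s ∧ A s u) ∧
  (∀ w ∈ W, ∀ s ∈ S, A w s) ∧
  (∀ s ∈ S, ∀ w ∈ W, ¬ A s w) ∧
  (∃ u ∈ U, ∃ r ∈ R, A u r) ∧
  (∀ r ∈ R, (a - 3) / 2 ≤ degIn A U r) ∧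
  (∀ u ∈ U, (a - 3) / 2 ≤ degIn A R u)

/-- the digraph (with arc relation `A`) is the digraph `H₃`,
with partite sets `S ∪ R` and `U ∪ W`. -/
def IsH3 [DecidableEq V] [Fintype V] (A : V → V → Prop) [DecidableRel A] (a : ℕ)
    (S R U W : Finset V) : Prop :=
  Even a ∧ 4 ≤ a ∧
  Disjoint S R ∧ Disjoint U W ∧ Disjoint (S ∪ R) (U ∪ W) ∧
  S ∪ R ∪ U ∪ W = Finset.univ ∧
  S.card = (a + 2) / 2 ∧ W.card = (a + 2) / 2 ∧
  U.card = (a - 2) / 2 ∧ R.card = (a - 2) / 2 ∧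
  (∀ x ∈ S ∪ R, ∀ y ∈ S ∪ R, ¬ A x y) ∧
  (∀ x ∈ U ∪ W, ∀ y ∈ U ∪ W, ¬ A x y) ∧
  (∀ r ∈ R, ∀ y ∈ U ∪ W, A r y ∧ A y r) ∧
  (∀ u ∈ U, ∀ x ∈ S ∪ R, A u x ∧ A x u) ∧
  (∀ w ∈ W, ∀ s ∈ S, A w s) ∧
  (∀ s ∈ S, ∀ w ∈ W, ¬ A s w)

/-- the digraph `H₂` on vertices `Fin 6`, where
`x₁ = 0, x₂ = 1, x₃ = 2, y₁ = 3, y₂ = 4, y₃ = 5`. -/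
def H2Adj : Fin 6 → Fin 6 → Prop := fun u v =>
  (u, v) ∈ ([(0,4),(4,2),(2,5),(5,0),(1,4),(4,1),(1,5),(5,1),(3,0),(0,3),(3,2),(2,3)] :
    List (Fin 6 × Fin 6))

instance : DecidableRel H2Adj := fun u v => by unfold H2Adj; infer_instance

section Aux
variable [DecidableEq V]

lemma cycNext_get (l : List V) (hc : l.Nodup) (i : Fin l.length) :
    cycNext l (l.get i) = l.get ⟨(i + 1) % l.length, Nat.mod_lt _ i.pos⟩ := by
  unfold cycNext
  rw [List.get_idxOf hc, List.getD_eq_getElem l _ (Nat.mod_lt _ i.pos)]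
  rfl

lemma cycNext_mem {l : List V} {x : V} (hx : x ∈ l) : cycNext l x ∈ l := by
  have h : x ∈ l := hx
  rw [← List.idxOf_lt_length_iff] at h
  unfold cycNext
  rw [List.getD_eq_getElem l _ (Nat.mod_lt _ (Nat.lt_of_le_of_lt (Nat.zero_le _) h))]
  exact List.getElem_mem _

lemma succ_mod_inj {n i j : ℕ} (hi : i < n) (hj : j < n)
    (h : (i + 1) % n = (j + 1) % n) : i = j := by
  rcases Nat.lt_or_ge (i+1) n with h1 | h1 <;> rcases Nat.lt_or_ge (j+1) n with h2 | h2
  · rw [Nat.mod_eq_of_lt h1, Nat.mod_eq_of_lt h2] at h; omega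
  · have hj' : j + 1 = n := by omega
    rw [Nat.mod_eq_of_lt h1, hj', Nat.mod_self] at h; omega
  · have hi' : i + 1 = n := by omega
    rw [Nat.mod_eq_of_lt h2, hi', Nat.mod_self] at h; omega
  · omega

lemma cycNext_injOn {l : List V} (hc : l.Nodup) {x y : V} (hx : x ∈ l) (hy : y ∈ l)
    (h : cycNext l x = cycNext l y) : x = y := by
  have hix := List.idxOf_lt_length_iff.mpr hx
  have hiy := List.idxOf_lt_length_iff.mpr hy
  have ex : l.get ⟨l.idxOf x, hix⟩ = x := List.idxOf_get hix
  have ey : l.get ⟨l.idxOf y, hiy⟩ = y := List.idxOf_get hiy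
  rw [← ex, ← ey] at h
  rw [cycNext_get l hc, cycNext_get l hc] at h
  have := List.Nodup.get_inj_iff hc |>.mp h
  have h2 : (l.idxOf x + 1) % l.length = (l.idxOf y + 1) % l.length := by
    simpa using congrArg Fin.val this
  have := succ_mod_inj hix hiy h2
  rw [← ex, ← ey]
  simp [this]

def cycPrev (l : List V) (x : V) : V :=
  l.getD ((l.idxOf x + l.length - 1) % l.length) x

lemma cycPrev_mem {l : List V} {x : V} (hx : x ∈ l) : cycPrev l x ∈ l := by
  have h := List.idxOf_lt_length_iff.mpr hx
  unfold cycPrev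
  rw [List.getD_eq_getElem l _ (Nat.mod_lt _ (Nat.lt_of_le_of_lt (Nat.zero_le _) h))]
  exact List.getElem_mem _

lemma cycNext_cycPrev {l : List V} (hc : l.Nodup) {x : V} (hx : x ∈ l) :
    cycNext l (cycPrev l x) = x := by
  have h := List.idxOf_lt_length_iff.mpr hx
  have hpos : 0 < l.length := Nat.lt_of_le_of_lt (Nat.zero_le _) h
  have hlt : (l.idxOf x + l.length - 1) % l.length < l.length := Nat.mod_lt _ hpos
  have e1 : cycPrev l x = l.get ⟨(l.idxOf x + l.length - 1) % l.length, hlt⟩ := by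
    unfold cycPrev
    rw [List.getD_eq_getElem l _ hlt]; rfl
  rw [e1, cycNext_get l hc]
  have : ((l.idxOf x + l.length - 1) % l.length + 1) % l.length = l.idxOf x := by
    rw [Nat.mod_add_mod]
    have : l.idxOf x + l.length - 1 + 1 = l.idxOf x + l.length := by omega
    rw [this, Nat.add_mod_right, Nat.mod_eq_of_lt h]
  simp only [this]
  exact List.idxOf_get h

lemma cycPrev_cycNext {l : List V} (hc : l.Nodup) {x : V} (hx : x ∈ l) :
    cycPrev l (cycNext l x) = x := by
  apply cycNext_injOn hc (cycPrev_mem (cycNext_mem hx)) hx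
  exact cycNext_cycPrev hc (cycNext_mem hx)

lemma getElem_idx_congr (l : List V) {a b : ℕ} (h : a = b) (ha : a < l.length) :
    l[a]'ha = l[b]'(h ▸ ha) := by subst h; rfl

lemma cycNext_getElem (l : List V) (hc : l.Nodup) (k : ℕ) (hk : k < l.length) :
    cycNext l (l[k]'hk) =
      l[(k + 1) % l.length]'(Nat.mod_lt _ (Nat.lt_of_le_of_lt (Nat.zero_le _) hk)) := by
  have := cycNext_get l hc ⟨k, hk⟩
  simpa [List.get_eq_getElem] using this

lemma getElem_indexOf' {l : List V} {x : V} (hx : x ∈ l)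
    (h : l.idxOf x < l.length) : l[l.idxOf x]'h = x := by
  have := List.idxOf_get h
  simpa [List.get_eq_getElem] using this

lemma merge_cycles (A : V → V → Prop) {p q : List V} (hp : IsDicycle A p) (hq : IsDicycle A q)
    (hdisj : ∀ x ∈ p, x ∉ q) {u v : V} (hu : u ∈ p) (hv : v ∈ q)
    (h1 : A u (cycNext q v)) (h2 : A v (cycNext p u)) :
    ∃ e, IsDicycle A e ∧ ∀ w, w ∈ e ↔ w ∈ p ∨ w ∈ q := by
  obtain ⟨hp2, hpn, hpA⟩ := hp
  obtain ⟨hq2, hqn, hqA⟩ := hq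
  set n := p.length with hn
  set m := q.length with hm
  have np : 0 < n := by omega
  have mp : 0 < m := by omega
  set i := p.idxOf u with hi
  set j := q.idxOf v with hj
  have hilt : i < n := List.idxOf_lt_length_iff.mpr hu
  have hjlt : j < m := List.idxOf_lt_length_iff.mpr hv
  set e := p.rotate (i+1) ++ q.rotate (j+1) with he
  have hel : e.length = n + m := by
    simp only [he, List.length_append, List.length_rotate]
    rfl
  have hen : e.Nodup := by
    refine List.Nodup.append (List.nodup_rotate.mpr hpn) (List.nodup_rotate.mpr hqn) ?_
    intro y hy hy'
    exact hdisj y (List.mem_rotate.mp hy) (List.mem_rotate.mp hy')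
  have egetL : ∀ (k : ℕ), k < n → ∀ (hke : k < e.length),
      e[k]'hke = p[(k + (i+1)) % n]'(Nat.mod_lt _ np) := by
    intro k hkn hke
    have h' : k < (p.rotate (i+1)).length := by rwa [List.length_rotate]
    show (p.rotate (i+1) ++ q.rotate (j+1))[k]'(by rw [← he]; exact hke) = _
    rw [List.getElem_append_left h', List.getElem_rotate]
  have egetR : ∀ (k : ℕ), n ≤ k → ∀ (hke : k < e.length),
      e[k]'hke = q[(k - n + (j+1)) % m]'(Nat.mod_lt _ mp) := by
    intro k hkn hke
    have h' : (p.rotate (i+1)).length ≤ k := by rw [List.length_rotate]; exact hkn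
    show (p.rotate (i+1) ++ q.rotate (j+1))[k]'(by rw [← he]; exact hke) = _
    rw [List.getElem_append_right h', List.getElem_rotate]
    congr 1
    rw [List.length_rotate]
  refine ⟨e, ⟨by omega, hen, ?_⟩, ?_⟩
  swap
  · intro w
    rw [he]
    simp only [List.mem_append, List.mem_rotate]
  intro x hx
  obtain ⟨k, hk, hek⟩ := List.mem_iff_getElem.mp hx
  have hk' : k < n + m := by rwa [hel] at hk
  have h2k : (k+1) % (n+m) < e.length := by rw [hel]; exact Nat.mod_lt _ (by omega)
  have hnext : cycNext e x = e[(k+1) % (n+m)]'h2k := by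
    rw [← hek]
    rw [cycNext_getElem e hen k hk]
    exact getElem_idx_congr e (by rw [hel]) _
  rcases Nat.lt_or_ge (k+1) n with hA | hA
  · -- inside p, not at end
    have i1 : (k+1) % (n+m) = k+1 := Nat.mod_eq_of_lt (by omega)
    have s2 : e[(k+1) % (n+m)]'h2k = e[k+1]'(i1 ▸ h2k) := getElem_idx_congr e i1 h2k
    have s3 := egetL (k+1) hA (i1 ▸ h2k)
    have s4 : x = p[(k + (i+1)) % n]'(Nat.mod_lt _ np) := by
      rw [← hek]; exact egetL k (by omega) hk
    set y := p[(k + (i+1)) % n]'(Nat.mod_lt _ np) with hy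
    have hAy : A y (p[((k+1) + (i+1)) % n]'(Nat.mod_lt _ np)) := by
      have hy2 := hpA y (List.getElem_mem _)
      rw [hy, cycNext_getElem p hpn] at hy2
      have ieq : ((k + (i+1)) % n + 1) % n = ((k+1) + (i+1)) % n := by
        rw [Nat.mod_add_mod]; congr 1; omega
      rw [getElem_idx_congr p ieq] at hy2
      exact hy2
    rw [hnext, s2, s3, s4]
    exact hAy
  rcases Nat.eq_or_lt_of_le hA with hB | hB
  · -- k + 1 = n : x = u, next = cycNext q v
    have hxu : x = u := by
      rw [← hek, egetL k (by omega) hk]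
      have ieq : (k + (i+1)) % n = i := by
        have : k + (i+1) = i + n := by omega
        rw [this, Nat.add_mod_right, Nat.mod_eq_of_lt hilt]
      rw [getElem_idx_congr p ieq]
      exact getElem_indexOf' hu _
    have i1 : (k+1) % (n+m) = n := by rw [← hB]; exact Nat.mod_eq_of_lt (by omega)
    have s2 : e[(k+1) % (n+m)]'h2k = e[n]'(i1 ▸ h2k) := getElem_idx_congr e i1 h2k
    have s3 := egetR n le_rfl (i1 ▸ h2k)
    have ieq : (n - n + (j+1)) % m = (j+1) % m := by congr 1; omega
    have s5 : cycNext q v = q[(j+1) % m]'(Nat.mod_lt _ mp) := by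
      have := cycNext_getElem q hqn j hjlt
      rw [getElem_indexOf' hv] at this
      exact this
    rw [hnext, s2, s3, getElem_idx_congr q ieq, hxu]
    rw [← s5]
    exact h1
  rcases Nat.lt_or_ge (k+1) (n+m) with hC | hC
  · -- inside q, not at end
    have i1 : (k+1) % (n+m) = k+1 := Nat.mod_eq_of_lt hC
    have s2 : e[(k+1) % (n+m)]'h2k = e[k+1]'(i1 ▸ h2k) := getElem_idx_congr e i1 h2k
    have s3 := egetR (k+1) (by omega) (i1 ▸ h2k)
    have s4 : x = q[(k - n + (j+1)) % m]'(Nat.mod_lt _ mp) := by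
      rw [← hek]; exact egetR k (by omega) hk
    set y := q[(k - n + (j+1)) % m]'(Nat.mod_lt _ mp) with hy
    have hAy : A y (q[((k+1) - n + (j+1)) % m]'(Nat.mod_lt _ mp)) := by
      have hy2 := hqA y (List.getElem_mem _)
      rw [hy, cycNext_getElem q hqn] at hy2
      have ieq : ((k - n + (j+1)) % m + 1) % m = ((k+1) - n + (j+1)) % m := by
        rw [Nat.mod_add_mod]; congr 1; omega
      rw [getElem_idx_congr q ieq] at hy2
      exact hy2
    rw [hnext, s2, s3, s4]
    exact hAy
  · -- k + 1 = n + m : x = v, next = cycNext p u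
    have hke : k + 1 = n + m := by omega
    have hxv : x = v := by
      rw [← hek, egetR k (by omega) hk]
      have ieq : (k - n + (j+1)) % m = j := by
        have : k - n + (j+1) = j + m := by omega
        rw [this, Nat.add_mod_right, Nat.mod_eq_of_lt hjlt]
      rw [getElem_idx_congr q ieq]
      exact getElem_indexOf' hv _
    have i1 : (k+1) % (n+m) = 0 := by rw [hke, Nat.mod_self]
    have s2 : e[(k+1) % (n+m)]'h2k = e[0]'(i1 ▸ h2k) := getElem_idx_congr e i1 h2k
    have s3 := egetL 0 np (i1 ▸ h2k)
    have ieq : (0 + (i+1)) % n = (i+1) % n := by congr 1; omega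
    have s5 : cycNext p u = p[(i+1) % n]'(Nat.mod_lt _ np) := by
      have := cycNext_getElem p hpn i hilt
      rw [getElem_indexOf' hu] at this
      exact this
    rw [hnext, s2, s3, getElem_idx_congr p ieq, hxv]
    rw [← s5]
    exact h2

lemma pair_bound [Fintype V] (A : V → V → Prop) [DecidableRel A] {V₁ V₂ : Finset V}
    (hbip : IsBipartition A V₁ V₂) {p q : List V} (hp : IsDicycle A p) (hq : IsDicycle A q)
    (hdisj : ∀ x ∈ p, x ∉ q)
    (hnm : ¬ ∃ e, IsDicycle A e ∧ ∀ w, w ∈ e ↔ w ∈ p ∨ w ∈ q) :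
    2 * arcsBetween A p.toFinset q.toFinset ≤ p.length * q.length := by
  obtain ⟨hVd, hVu, hA1, hA2⟩ := hbip
  have hmem : ∀ x : V, x ∈ V₁ ∨ x ∈ V₂ := by
    intro x
    have : x ∈ V₁ ∪ V₂ := hVu ▸ mem_univ x
    simpa [mem_union] using this
  have hd12 : ∀ x, x ∈ V₁ → x ∈ V₂ → False := fun x h1 h2 =>
    (disjoint_left.mp hVd h1) h2
  have key : ∀ u ∈ p, ∀ v ∈ q, ¬ (A u (cycNext q v) ∧ A v (cycNext p u)) := by
    rintro u hu v hv ⟨ha, hb⟩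
    exact hnm (merge_cycles A hp hq hdisj hu hv ha hb)
  -- alternation
  have altp : ∀ x ∈ p, (x ∈ V₁ → cycNext p x ∈ V₂) ∧ (x ∈ V₂ → cycNext p x ∈ V₁) := by
    intro x hx
    have hAx := hp.2.2 x hx
    constructor
    · intro h1
      rcases hmem (cycNext p x) with h | h
      · exact absurd hAx (hA1 x h1 _ h)
      · exact h
    · intro h1
      rcases hmem (cycNext p x) with h | h
      · exact h
      · exact absurd hAx (hA2 x h1 _ h)
  have altq : ∀ x ∈ q, (x ∈ V₁ → cycNext q x ∈ V₂) ∧ (x ∈ V₂ → cycNext q x ∈ V₁) := by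
    intro x hx
    have hAx := hq.2.2 x hx
    constructor
    · intro h1
      rcases hmem (cycNext q x) with h | h
      · exact absurd hAx (hA1 x h1 _ h)
      · exact h
    · intro h1
      rcases hmem (cycNext q x) with h | h
      · exact h
      · exact absurd hAx (hA2 x h1 _ h)
  set X₁ := p.toFinset ∩ V₁ with hX₁
  set X₂ := p.toFinset ∩ V₂ with hX₂
  set Y₁ := q.toFinset ∩ V₁ with hY₁
  set Y₂ := q.toFinset ∩ V₂ with hY₂
  have hX₁mem : ∀ x, x ∈ X₁ ↔ x ∈ p ∧ x ∈ V₁ := by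
    intro x; simp [hX₁, mem_inter, List.mem_toFinset]
  have hX₂mem : ∀ x, x ∈ X₂ ↔ x ∈ p ∧ x ∈ V₂ := by
    intro x; simp [hX₂, mem_inter, List.mem_toFinset]
  have hY₁mem : ∀ x, x ∈ Y₁ ↔ x ∈ q ∧ x ∈ V₁ := by
    intro x; simp [hY₁, mem_inter, List.mem_toFinset]
  have hY₂mem : ∀ x, x ∈ Y₂ ↔ x ∈ q ∧ x ∈ V₂ := by
    intro x; simp [hY₂, mem_inter, List.mem_toFinset]
  -- prev maps
  have altp' : ∀ x, (x ∈ X₂ → cycPrev p x ∈ X₁) ∧ (x ∈ X₁ → cycPrev p x ∈ X₂) := by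
    intro x
    constructor
    · intro hx
      obtain ⟨hxp, hx2⟩ := (hX₂mem x).mp hx
      have hm : cycPrev p x ∈ p := cycPrev_mem hxp
      rcases hmem (cycPrev p x) with h | h
      · exact (hX₁mem _).mpr ⟨hm, h⟩
      · exfalso
        have := (altp _ hm).2 h
        rw [cycNext_cycPrev hp.2.1 hxp] at this
        exact hd12 x this hx2
    · intro hx
      obtain ⟨hxp, hx1⟩ := (hX₁mem x).mp hx
      have hm : cycPrev p x ∈ p := cycPrev_mem hxp
      rcases hmem (cycPrev p x) with h | h
      · exfalso
        have := (altp _ hm).1 h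
        rw [cycNext_cycPrev hp.2.1 hxp] at this
        exact hd12 x hx1 this
      · exact (hX₂mem _).mpr ⟨hm, h⟩
  have altq' : ∀ x, (x ∈ Y₂ → cycPrev q x ∈ Y₁) ∧ (x ∈ Y₁ → cycPrev q x ∈ Y₂) := by
    intro x
    constructor
    · intro hx
      obtain ⟨hxp, hx2⟩ := (hY₂mem x).mp hx
      have hm : cycPrev q x ∈ q := cycPrev_mem hxp
      rcases hmem (cycPrev q x) with h | h
      · exact (hY₁mem _).mpr ⟨hm, h⟩
      · exfalso
        have := (altq _ hm).2 h
        rw [cycNext_cycPrev hq.2.1 hxp] at this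
        exact hd12 x this hx2
    · intro hx
      obtain ⟨hxp, hx1⟩ := (hY₁mem x).mp hx
      have hm : cycPrev q x ∈ q := cycPrev_mem hxp
      rcases hmem (cycPrev q x) with h | h
      · exfalso
        have := (altq _ hm).1 h
        rw [cycNext_cycPrev hq.2.1 hxp] at this
        exact hd12 x hx1 this
      · exact (hY₂mem _).mpr ⟨hm, h⟩
  have fwdp : ∀ x, (x ∈ X₁ → cycNext p x ∈ X₂) ∧ (x ∈ X₂ → cycNext p x ∈ X₁) := by
    intro x
    constructor
    · intro hx
      obtain ⟨hxp, hx1⟩ := (hX₁mem x).mp hx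
      exact (hX₂mem _).mpr ⟨cycNext_mem hxp, (altp x hxp).1 hx1⟩
    · intro hx
      obtain ⟨hxp, hx2⟩ := (hX₂mem x).mp hx
      exact (hX₁mem _).mpr ⟨cycNext_mem hxp, (altp x hxp).2 hx2⟩
  have fwdq : ∀ x, (x ∈ Y₁ → cycNext q x ∈ Y₂) ∧ (x ∈ Y₂ → cycNext q x ∈ Y₁) := by
    intro x
    constructor
    · intro hx
      obtain ⟨hxp, hx1⟩ := (hY₁mem x).mp hx
      exact (hY₂mem _).mpr ⟨cycNext_mem hxp, (altq x hxp).1 hx1⟩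
    · intro hx
      obtain ⟨hxp, hx2⟩ := (hY₂mem x).mp hx
      exact (hY₁mem _).mpr ⟨cycNext_mem hxp, (altq x hxp).2 hx2⟩
  -- card equalities
  have cardX : X₁.card = X₂.card := by
    refine card_nbij' (cycNext p) (cycPrev p) ?_ ?_ ?_ ?_
    · intro x hx; exact (fwdp x).1 hx
    · intro x hx; exact (altp' x).1 hx
    · intro x hx
      exact cycPrev_cycNext hp.2.1 ((hX₁mem x).mp hx).1
    · intro x hx
      exact cycNext_cycPrev hp.2.1 ((hX₂mem x).mp hx).1
  have cardY : Y₁.card = Y₂.card := by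
    refine card_nbij' (cycNext q) (cycPrev q) ?_ ?_ ?_ ?_
    · intro x hx; exact (fwdq x).1 hx
    · intro x hx; exact (altq' x).1 hx
    · intro x hx
      exact cycPrev_cycNext hq.2.1 ((hY₁mem x).mp hx).1
    · intro x hx
      exact cycNext_cycPrev hq.2.1 ((hY₂mem x).mp hx).1
  have cardpX : X₁.card + X₂.card = p.length := by
    rw [← card_union_of_disjoint (hVd.mono (inter_subset_right) (inter_subset_right))]
    rw [← inter_union_distrib_left, hVu, inter_univ]
    exact List.toFinset_card_of_nodup hp.2.1
  have cardqY : Y₁.card + Y₂.card = q.length := by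
    rw [← card_union_of_disjoint (hVd.mono (inter_subset_right) (inter_subset_right))]
    rw [← inter_union_distrib_left, hVu, inter_univ]
    exact List.toFinset_card_of_nodup hq.2.1
  -- counting equalities
  have E1 : ((X₁ ×ˢ Y₂).filter (fun r => A r.1 r.2)).card
      = ((X₁ ×ˢ Y₁).filter (fun r => A r.1 (cycNext q r.2))).card := by
    refine card_nbij' (fun r => (r.1, cycPrev q r.2)) (fun r => (r.1, cycNext q r.2)) ?_ ?_ ?_ ?_
    · rintro ⟨x, y⟩ hr
      simp only [mem_coe, mem_filter, mem_product] at hr ⊢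
      obtain ⟨⟨h1, h2⟩, h3⟩ := hr
      refine ⟨⟨h1, (altq' y).1 h2⟩, ?_⟩
      rwa [cycNext_cycPrev hq.2.1 ((hY₂mem y).mp h2).1]
    · rintro ⟨x, y⟩ hr
      simp only [mem_coe, mem_filter, mem_product] at hr ⊢
      obtain ⟨⟨h1, h2⟩, h3⟩ := hr
      exact ⟨⟨h1, (fwdq y).1 h2⟩, h3⟩
    · rintro ⟨x, y⟩ hr
      simp only [mem_coe, mem_filter, mem_product] at hr
      simp only [Prod.mk.injEq]
      refine ⟨?_, ?_⟩ <;> first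
        | trivial
        | exact cycNext_cycPrev hq.2.1 ((hY₂mem y).mp hr.1.2).1
    · rintro ⟨x, y⟩ hr
      simp only [mem_coe, mem_filter, mem_product] at hr
      simp only [Prod.mk.injEq]
      refine ⟨?_, ?_⟩ <;> first
        | trivial
        | exact cycPrev_cycNext hq.2.1 ((hY₁mem y).mp hr.1.2).1
  have E2 : ((Y₁ ×ˢ X₂).filter (fun r => A r.1 r.2)).card
      = ((X₁ ×ˢ Y₁).filter (fun r => A r.2 (cycNext p r.1))).card := by
    refine card_nbij' (fun r => (cycPrev p r.2, r.1)) (fun r => (r.2, cycNext p r.1)) ?_ ?_ ?_ ?_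
    · rintro ⟨y, x⟩ hr
      simp only [mem_coe, mem_filter, mem_product] at hr ⊢
      obtain ⟨⟨h1, h2⟩, h3⟩ := hr
      refine ⟨⟨(altp' x).1 h2, h1⟩, ?_⟩
      rwa [cycNext_cycPrev hp.2.1 ((hX₂mem x).mp h2).1]
    · rintro ⟨x, y⟩ hr
      simp only [mem_coe, mem_filter, mem_product] at hr ⊢
      obtain ⟨⟨h1, h2⟩, h3⟩ := hr
      exact ⟨⟨h2, (fwdp x).1 h1⟩, h3⟩
    · rintro ⟨y, x⟩ hr
      simp only [mem_coe, mem_filter, mem_product] at hr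
      simp only [Prod.mk.injEq]
      refine ⟨?_, ?_⟩ <;> first
        | trivial
        | exact cycNext_cycPrev hp.2.1 ((hX₂mem x).mp hr.1.2).1
    · rintro ⟨x, y⟩ hr
      simp only [mem_coe, mem_filter, mem_product] at hr
      simp only [Prod.mk.injEq]
      refine ⟨?_, ?_⟩ <;> first
        | trivial
        | exact cycPrev_cycNext hp.2.1 ((hX₁mem x).mp hr.1.1).1
  have E3 : ((X₂ ×ˢ Y₁).filter (fun r => A r.1 r.2)).card
      = ((X₂ ×ˢ Y₂).filter (fun r => A r.1 (cycNext q r.2))).card := by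
    refine card_nbij' (fun r => (r.1, cycPrev q r.2)) (fun r => (r.1, cycNext q r.2)) ?_ ?_ ?_ ?_
    · rintro ⟨x, y⟩ hr
      simp only [mem_coe, mem_filter, mem_product] at hr ⊢
      obtain ⟨⟨h1, h2⟩, h3⟩ := hr
      refine ⟨⟨h1, (altq' y).2 h2⟩, ?_⟩
      rwa [cycNext_cycPrev hq.2.1 ((hY₁mem y).mp h2).1]
    · rintro ⟨x, y⟩ hr
      simp only [mem_coe, mem_filter, mem_product] at hr ⊢
      obtain ⟨⟨h1, h2⟩, h3⟩ := hr
      exact ⟨⟨h1, (fwdq y).2 h2⟩, h3⟩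
    · rintro ⟨x, y⟩ hr
      simp only [mem_coe, mem_filter, mem_product] at hr
      simp only [Prod.mk.injEq]
      refine ⟨?_, ?_⟩ <;> first
        | trivial
        | exact cycNext_cycPrev hq.2.1 ((hY₁mem y).mp hr.1.2).1
    · rintro ⟨x, y⟩ hr
      simp only [mem_coe, mem_filter, mem_product] at hr
      simp only [Prod.mk.injEq]
      refine ⟨?_, ?_⟩ <;> first
        | trivial
        | exact cycPrev_cycNext hq.2.1 ((hY₂mem y).mp hr.1.2).1
  have E4 : ((Y₂ ×ˢ X₁).filter (fun r => A r.1 r.2)).card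
      = ((X₂ ×ˢ Y₂).filter (fun r => A r.2 (cycNext p r.1))).card := by
    refine card_nbij' (fun r => (cycPrev p r.2, r.1)) (fun r => (r.2, cycNext p r.1)) ?_ ?_ ?_ ?_
    · rintro ⟨y, x⟩ hr
      simp only [mem_coe, mem_filter, mem_product] at hr ⊢
      obtain ⟨⟨h1, h2⟩, h3⟩ := hr
      refine ⟨⟨(altp' x).2 h2, h1⟩, ?_⟩
      rwa [cycNext_cycPrev hp.2.1 ((hX₁mem x).mp h2).1]
    · rintro ⟨x, y⟩ hr
      simp only [mem_coe, mem_filter, mem_product] at hr ⊢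
      obtain ⟨⟨h1, h2⟩, h3⟩ := hr
      exact ⟨⟨h2, (fwdp x).2 h1⟩, h3⟩
    · rintro ⟨y, x⟩ hr
      simp only [mem_coe, mem_filter, mem_product] at hr
      simp only [Prod.mk.injEq]
      refine ⟨?_, ?_⟩ <;> first
        | trivial
        | exact cycNext_cycPrev hp.2.1 ((hX₁mem x).mp hr.1.2).1
    · rintro ⟨x, y⟩ hr
      simp only [mem_coe, mem_filter, mem_product] at hr
      simp only [Prod.mk.injEq]
      refine ⟨?_, ?_⟩ <;> first
        | trivial
        | exact cycPrev_cycNext hp.2.1 ((hX₂mem x).mp hr.1.1).1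
  -- pointwise disjointness bound
  have bound1 : ((X₁ ×ˢ Y₁).filter (fun r => A r.1 (cycNext q r.2))).card
      + ((X₁ ×ˢ Y₁).filter (fun r => A r.2 (cycNext p r.1))).card ≤ X₁.card * Y₁.card := by
    rw [← card_union_of_disjoint]
    · calc _ ≤ (X₁ ×ˢ Y₁).card := card_le_card (by
          intro r hr
          simp only [mem_union, mem_filter] at hr
          rcases hr with h | h
          · exact h.1
          · exact h.1)
        _ = X₁.card * Y₁.card := card_product _ _
    · rw [disjoint_filter]
      rintro ⟨x, y⟩ hr h1 h2
      simp only [mem_product] at hr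
      exact key x ((hX₁mem x).mp hr.1).1 y ((hY₁mem y).mp hr.2).1 ⟨h1, h2⟩
  have bound2 : ((X₂ ×ˢ Y₂).filter (fun r => A r.1 (cycNext q r.2))).card
      + ((X₂ ×ˢ Y₂).filter (fun r => A r.2 (cycNext p r.1))).card ≤ X₂.card * Y₂.card := by
    rw [← card_union_of_disjoint]
    · calc _ ≤ (X₂ ×ˢ Y₂).card := card_le_card (by
          intro r hr
          simp only [mem_union, mem_filter] at hr
          rcases hr with h | h
          · exact h.1
          · exact h.1)
        _ = X₂.card * Y₂.card := card_product _ _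
    · rw [disjoint_filter]
      rintro ⟨x, y⟩ hr h1 h2
      simp only [mem_product] at hr
      exact key x ((hX₂mem x).mp hr.1).1 y ((hY₂mem y).mp hr.2).1 ⟨h1, h2⟩
  -- decompose arcsBetween
  have decomp1 : ((p.toFinset ×ˢ q.toFinset).filter (fun r => A r.1 r.2)).card
      ≤ ((X₁ ×ˢ Y₂).filter (fun r => A r.1 r.2)).card
        + ((X₂ ×ˢ Y₁).filter (fun r => A r.1 r.2)).card := by
    rw [← card_union_of_disjoint]
    · refine card_le_card ?_
      rintro ⟨x, y⟩ hr
      simp only [mem_filter, mem_product, mem_union, List.mem_toFinset] at hr ⊢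
      obtain ⟨⟨h1, h2⟩, h3⟩ := hr
      rcases hmem x with hx | hx
      · rcases hmem y with hy | hy
        · exact absurd h3 (hA1 x hx y hy)
        · exact Or.inl ⟨⟨(hX₁mem x).mpr ⟨h1, hx⟩, (hY₂mem y).mpr ⟨h2, hy⟩⟩, h3⟩
      · rcases hmem y with hy | hy
        · exact Or.inr ⟨⟨(hX₂mem x).mpr ⟨h1, hx⟩, (hY₁mem y).mpr ⟨h2, hy⟩⟩, h3⟩
        · exact absurd h3 (hA2 x hx y hy)
    · refine disjoint_filter_filter ?_
      rw [Finset.disjoint_left]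
      rintro ⟨x, y⟩ hr hr'
      simp only [mem_product] at hr hr'
      exact hd12 x ((hX₁mem x).mp hr.1).2 ((hX₂mem x).mp hr'.1).2
  have decomp2 : ((q.toFinset ×ˢ p.toFinset).filter (fun r => A r.1 r.2)).card
      ≤ ((Y₁ ×ˢ X₂).filter (fun r => A r.1 r.2)).card
        + ((Y₂ ×ˢ X₁).filter (fun r => A r.1 r.2)).card := by
    rw [← card_union_of_disjoint]
    · refine card_le_card ?_
      rintro ⟨x, y⟩ hr
      simp only [mem_filter, mem_product, mem_union, List.mem_toFinset] at hr ⊢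
      obtain ⟨⟨h1, h2⟩, h3⟩ := hr
      rcases hmem x with hx | hx
      · rcases hmem y with hy | hy
        · exact absurd h3 (hA1 x hx y hy)
        · exact Or.inl ⟨⟨(hY₁mem x).mpr ⟨h1, hx⟩, (hX₂mem y).mpr ⟨h2, hy⟩⟩, h3⟩
      · rcases hmem y with hy | hy
        · exact Or.inr ⟨⟨(hY₂mem x).mpr ⟨h1, hx⟩, (hX₁mem y).mpr ⟨h2, hy⟩⟩, h3⟩
        · exact absurd h3 (hA2 x hx y hy)
    · refine disjoint_filter_filter ?_
      rw [Finset.disjoint_left]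
      rintro ⟨x, y⟩ hr hr'
      simp only [mem_product] at hr hr'
      exact hd12 x ((hY₁mem x).mp hr.1).2 ((hY₂mem x).mp hr'.1).2
  have main : arcsBetween A p.toFinset q.toFinset ≤ X₁.card * Y₁.card + X₂.card * Y₂.card := by
    unfold arcsBetween
    calc _ ≤ (((X₁ ×ˢ Y₂).filter (fun r => A r.1 r.2)).card
            + ((X₂ ×ˢ Y₁).filter (fun r => A r.1 r.2)).card)
          + (((Y₁ ×ˢ X₂).filter (fun r => A r.1 r.2)).card
            + ((Y₂ ×ˢ X₁).filter (fun r => A r.1 r.2)).card) :=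
        Nat.add_le_add decomp1 decomp2
      _ = (((X₁ ×ˢ Y₁).filter (fun r => A r.1 (cycNext q r.2))).card
            + ((X₁ ×ˢ Y₁).filter (fun r => A r.2 (cycNext p r.1))).card)
          + (((X₂ ×ˢ Y₂).filter (fun r => A r.1 (cycNext q r.2))).card
            + ((X₂ ×ˢ Y₂).filter (fun r => A r.2 (cycNext p r.1))).card) := by
        rw [E1, E2, E3, E4]; ring
      _ ≤ _ := Nat.add_le_add bound1 bound2
  have : p.length * q.length = 2 * (X₁.card * Y₁.card + X₂.card * Y₂.card) := by
    rw [← cardpX, ← cardqY, ← cardX, ← cardY]; ring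
  omega

def Ufold (M : List (List V)) : Finset V := M.foldr (fun d s => d.toFinset ∪ s) ∅

lemma mem_Ufold {M : List (List V)} {v : V} : v ∈ Ufold M ↔ ∃ d ∈ M, v ∈ d := by
  induction M with
  | nil => simp [Ufold]
  | cons d M ih =>
    simp only [Ufold, List.foldr_cons, mem_union, List.mem_toFinset, List.mem_cons]
    rw [show (M.foldr (fun d s => d.toFinset ∪ s) ∅) = Ufold M from rfl, ih]
    constructor
    · rintro (h | ⟨e, he, hv⟩)
      · exact ⟨d, Or.inl rfl, h⟩
      · exact ⟨e, Or.inr he, hv⟩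
    · rintro ⟨e, (rfl | he), hv⟩
      · exact Or.inl hv
      · exact Or.inr ⟨e, he, hv⟩

lemma arcsBetween_empty_right (A : V → V → Prop) [DecidableRel A] (X : Finset V) :
    arcsBetween A X ∅ = 0 := by
  unfold arcsBetween
  simp

lemma arcsBetween_union_right (A : V → V → Prop) [DecidableRel A] (X Y Z : Finset V)
    (h : Disjoint Y Z) :
    arcsBetween A X (Y ∪ Z) = arcsBetween A X Y + arcsBetween A X Z := by
  unfold arcsBetween
  have e1 : ((X ×ˢ (Y ∪ Z)).filter (fun p => A p.1 p.2))
      = ((X ×ˢ Y).filter (fun p => A p.1 p.2)) ∪ ((X ×ˢ Z).filter (fun p => A p.1 p.2)) := by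
    ext r
    simp only [mem_filter, mem_product, mem_union]
    tauto
  have e2 : (((Y ∪ Z) ×ˢ X).filter (fun p => A p.1 p.2))
      = ((Y ×ˢ X).filter (fun p => A p.1 p.2)) ∪ ((Z ×ˢ X).filter (fun p => A p.1 p.2)) := by
    ext r
    simp only [mem_filter, mem_product, mem_union]
    tauto
  rw [e1, e2, card_union_of_disjoint, card_union_of_disjoint]
  · ring
  · rw [Finset.disjoint_left]
    rintro ⟨y, x⟩ hr hr'
    simp only [mem_filter, mem_product] at hr hr'
    exact (Finset.disjoint_left.mp h hr.1.1) hr'.1.1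
  · rw [Finset.disjoint_left]
    rintro ⟨x, y⟩ hr hr'
    simp only [mem_filter, mem_product] at hr hr'
    exact (Finset.disjoint_left.mp h hr.1.2) hr'.1.2

lemma foldr_bound (A : V → V → Prop) [DecidableRel A] (X : Finset V) (t : ℕ) :
    ∀ M : List (List V), M.Pairwise (fun c d => ∀ x ∈ c, x ∉ d) →
    (∀ d ∈ M, 2 * arcsBetween A X d.toFinset ≤ t * d.length) →
    2 * arcsBetween A X (Ufold M) ≤ t * (M.map List.length).sum := by
  intro M
  induction M with
  | nil => intro _ _; simp [Ufold, arcsBetween_empty_right]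
  | cons d M ih =>
    intro hpw hb
    have hdisj : Disjoint d.toFinset (Ufold M) := by
      rw [Finset.disjoint_left]
      intro x hx hx'
      obtain ⟨e, he, hv⟩ := mem_Ufold.mp hx'
      exact (List.pairwise_cons.mp hpw).1 e he x (List.mem_toFinset.mp hx) hv
    have : Ufold (d :: M) = d.toFinset ∪ Ufold M := rfl
    rw [this, arcsBetween_union_right A X _ _ hdisj]
    have h1 := hb d (List.mem_cons_self)
    have h2 := ih (List.pairwise_cons.mp hpw).2 (fun e he => hb e (List.mem_cons_of_mem d he))
    simp only [List.map_cons, List.sum_cons]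
    calc 2 * (arcsBetween A X d.toFinset + arcsBetween A X (Ufold M))
        = 2 * arcsBetween A X d.toFinset + 2 * arcsBetween A X (Ufold M) := by ring
      _ ≤ t * d.length + t * (M.map List.length).sum := Nat.add_le_add h1 h2
      _ = t * (d.length + (M.map List.length).sum) := by ring

lemma card_Ufold : ∀ M : List (List V), M.Pairwise (fun c d => ∀ x ∈ c, x ∉ d) →
    (∀ d ∈ M, d.Nodup) → (Ufold M).card = (M.map List.length).sum := by
  intro M
  induction M with
  | nil => intro _ _; simp [Ufold]
  | cons d M ih =>
    intro hpw hn
    have hdisj : Disjoint d.toFinset (Ufold M) := by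
      rw [Finset.disjoint_left]
      intro x hx hx'
      obtain ⟨e, he, hv⟩ := mem_Ufold.mp hx'
      exact (List.pairwise_cons.mp hpw).1 e he x (List.mem_toFinset.mp hx) hv
    have : Ufold (d :: M) = d.toFinset ∪ Ufold M := rfl
    rw [this, card_union_of_disjoint hdisj,
      List.toFinset_card_of_nodup (hn d (List.mem_cons_self)),
      ih (List.pairwise_cons.mp hpw).2 (fun e he => hn e (List.mem_cons_of_mem d he))]
    simp

end Aux

theorem stmt19 {V : Type*} [DecidableEq V] [Fintype V] (A : V → V → Prop) [DecidableRel A]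
    (V₁ V₂ : Finset V) (a : ℕ)
    (hbip : IsBipartition A V₁ V₂) (h1 : V₁.card = a) (h2 : V₂.card = a)
    (L : List (List V)) (hs : 2 ≤ L.length)
    (hcyc : ∀ c ∈ L, IsDicycle A c)
    (hdisj : L.Pairwise (fun c d => ∀ x ∈ c, x ∉ d))
    (hcover : ∀ v, ∃ c ∈ L, v ∈ c)
    (hnomerge : ∀ c ∈ L, ∀ d ∈ L, c ≠ d →
      ¬ ∃ e : List V, IsDicycle A e ∧ ∀ v, v ∈ e ↔ v ∈ c ∨ v ∈ d)
    (c₁ : List V) (hc₁ : c₁ ∈ L) (hshort : ∀ c ∈ L, c₁.length ≤ c.length) :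
    2 * arcsBetween A c₁.toFinset (Finset.univ \ c₁.toFinset)
      ≤ c₁.length * (2 * a - c₁.length) := by
  have hc₁cyc := hcyc c₁ hc₁
  obtain ⟨L1, L2, hLeq⟩ := List.append_of_mem hc₁
  set L' := L1 ++ L2 with hL'
  have hperm : L.Perm (c₁ :: L') := by rw [hLeq, hL']; exact List.perm_middle
  have hsymm : ∀ {x y : List V}, (∀ v ∈ x, v ∉ y) → (∀ v ∈ y, v ∉ x) :=
    fun h v hv hv' => h v hv' hv
  have hpw' : (c₁ :: L').Pairwise (fun c d => ∀ x ∈ c, x ∉ d) :=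
    (List.Perm.pairwise_iff hsymm hperm).mp hdisj
  have hhead : ∀ d ∈ L', ∀ x ∈ c₁, x ∉ d := (List.pairwise_cons.mp hpw').1
  have hpwL' := (List.pairwise_cons.mp hpw').2
  have hsub : ∀ d ∈ L', d ∈ L := fun d hd => hperm.symm.subset (List.mem_cons_of_mem c₁ hd)
  have hb : ∀ d ∈ L', 2 * arcsBetween A c₁.toFinset d.toFinset ≤ c₁.length * d.length := by
    intro d hd
    have hdL := hsub d hd
    have hne : c₁ ≠ d := by
      intro h
      obtain ⟨x, hx⟩ := List.exists_mem_of_length_pos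
        (show 0 < c₁.length by have := hc₁cyc.1; omega)
      exact hhead d hd x hx (h ▸ hx)
    exact pair_bound A hbip hc₁cyc (hcyc d hdL) (fun x hx => hhead d hd x hx)
      (hnomerge c₁ hc₁ d hdL hne)
  have hU : Ufold L' = Finset.univ \ c₁.toFinset := by
    ext v
    simp only [mem_sdiff, mem_univ, true_and, List.mem_toFinset]
    rw [mem_Ufold]
    constructor
    · rintro ⟨d, hd, hv⟩ hv'
      exact hhead d hd v hv' hv
    · intro hv
      obtain ⟨d, hdL, hvd⟩ := hcover v
      have hne : d ≠ c₁ := fun h => hv (h ▸ hvd)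
      have hdm : d ∈ c₁ :: L' := hperm.subset hdL
      rcases List.mem_cons.mp hdm with h | h
      · exact absurd h hne
      · exact ⟨d, h, hvd⟩
  have hcardU : (Ufold L).card = (L.map List.length).sum :=
    card_Ufold L hdisj (fun d hd => (hcyc d hd).2.1)
  have hUL : Ufold L = Finset.univ := by
    ext v; simp only [mem_univ, iff_true]; exact mem_Ufold.mpr (hcover v)
  have htot : (L.map List.length).sum = 2 * a := by
    rw [← hcardU, hUL]
    have huv : (Finset.univ : Finset V) = V₁ ∪ V₂ := hbip.2.1.symm
    rw [huv, card_union_of_disjoint hbip.1, h1, h2]; ring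
  have hsum : c₁.length + (L'.map List.length).sum = 2 * a := by
    have hps := (hperm.map List.length).sum_eq
    simp only [List.map_cons, List.sum_cons] at hps
    omega
  have hmain := foldr_bound A c₁.toFinset c₁.length L' hpwL' hb
  rw [hU] at hmain
  have hfin : c₁.length * (L'.map List.length).sum = c₁.length * (2 * a - c₁.length) := by
    congr 1; omega
  exact hfin ▸ hmain
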